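/- A subset S of {0, 1, ..., n−1} is the type B peak set of some signed permutation of {1,...,n} (n ≥ 2) if and only if S contains no two consecutive integers. -/

import Mathlib

/-- The value `π_j` of the extended word of a signed permutation written as a
list `l = (π₁, …, π_n)`, with the convention `π₀ = 0`. -/
def valB (l : List ℤ) (j : ℕ) : ℤ :=
  if j = 0 then 0 else l.getD (j - 1) 0

/-- The type B peak set of a signed permutation `l = (π₁, …, π_n)`:
`{i ∈ [0, n-1] : π_{i-1} < π_i > π_{i+1}}` with `π₀ = 0`, `π₋₁ = -∞`. -/
def peakSetB (l : List ℤ) : Set ℕ :=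
  {i | i < l.length ∧ valB l (i + 1) < valB l i ∧ (i = 0 ∨ valB l (i - 1) < valB l i)}

open Classical in
/-- Number of "interior peak positions" below `j`. -/
noncomputable def cB (S : Set ℕ) (j : ℕ) : ℕ :=
  ((Finset.range j).filter (fun t => t + 1 ∈ S)).card

open Classical in
noncomputable def fB (n : ℕ) (S : Set ℕ) (j : ℕ) : ℕ :=
  if j + 1 ∈ S then n - cB S n + cB S j + 1 else j - cB S j + 1

open Classical in
noncomputable def aB (n : ℕ) (S : Set ℕ) (j : ℕ) : ℤ :=
  if j = 0 ∧ 0 ∈ S then -(fB n S j : ℤ) else (fB n S j : ℤ)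

lemma cB_le (S : Set ℕ) (j : ℕ) : cB S j ≤ j := by
  classical
  calc cB S j ≤ (Finset.range j).card := Finset.card_filter_le _ _
  _ = j := Finset.card_range j

lemma cB_mono (S : Set ℕ) {i j : ℕ} (h : i ≤ j) : cB S i ≤ cB S j := by
  classical
  exact Finset.card_le_card (Finset.filter_subset_filter _ (Finset.range_subset_range.2 h))

lemma cB_succ_mem (S : Set ℕ) {j : ℕ} (h : j + 1 ∈ S) : cB S (j + 1) = cB S j + 1 := by
  classical
  unfold cB
  rw [Finset.range_add_one, Finset.filter_insert, if_pos h,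
    Finset.card_insert_of_notMem (by simp)]

lemma cB_succ_not_mem (S : Set ℕ) {j : ℕ} (h : j + 1 ∉ S) : cB S (j + 1) = cB S j := by
  classical
  unfold cB
  rw [Finset.range_add_one, Finset.filter_insert, if_neg h]

lemma cB_le_add (S : Set ℕ) {i j : ℕ} (h : i ≤ j) : cB S j ≤ cB S i + (j - i) := by
  classical
  induction j with
  | zero =>
    have : i = 0 := by omega
    subst this; simp
  | succ m ih =>
    rcases Nat.lt_or_ge i (m + 1) with h' | h'
    · have hm := ih (by omega)
      by_cases hFm : m + 1 ∈ S
      · rw [cB_succ_mem S hFm]; omega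
      · rw [cB_succ_not_mem S hFm]; omega
    · have : i = m + 1 := le_antisymm h h'
      subst this; omega

lemma cB_key (S : Set ℕ) {n j : ℕ} (hj : j < n) (h : j + 1 ∉ S) :
    cB S n + (j - cB S j) + 1 ≤ n := by
  classical
  set F : ℕ → Prop := fun t => t + 1 ∈ S with hF
  have hdisj : Disjoint ((Finset.range n).filter F)
      ((Finset.range (j + 1)).filter (fun t => ¬ F t)) := by
    rw [Finset.disjoint_left]
    intro x hx hx'
    simp only [Finset.mem_filter] at hx hx'
    exact hx'.2 hx.2
  have hsub : ((Finset.range n).filter F) ∪ ((Finset.range (j + 1)).filter (fun t => ¬ F t))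
      ⊆ Finset.range n := by
    apply Finset.union_subset (Finset.filter_subset _ _)
    exact (Finset.filter_subset _ _).trans (Finset.range_subset_range.2 (by omega))
  have hcard := Finset.card_le_card hsub
  rw [Finset.card_union_of_disjoint hdisj, Finset.card_range] at hcard
  have hB : cB S (j + 1) + ((Finset.range (j + 1)).filter (fun t => ¬ F t)).card = j + 1 := by
    have := Finset.card_filter_add_card_filter_not (s := Finset.range (j + 1)) F
    rw [Finset.card_range] at this
    convert this using 3
    unfold cB; congr
  have h1 := cB_succ_not_mem S h
  have h2 := cB_le S j
  have : cB S n = ((Finset.range n).filter F).card := rfl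
  omega

theorem stmt13 (n : ℕ) (hn : 2 ≤ n) (S : Set ℕ) (hS : ∀ i ∈ S, i ≤ n - 1) :
    (∃ l : List ℤ, (l.map Int.natAbs).Perm (List.range' 1 n) ∧ peakSetB l = S) ↔
      ∀ i ∈ S, i + 1 ∉ S := by
  classical
  constructor
  · rintro ⟨l, -, rfl⟩ i hi hi1
    obtain ⟨-, h1, -⟩ := hi
    obtain ⟨-, h2, h3⟩ := hi1
    rcases h3 with h3 | h3
    · omega
    · rw [Nat.add_sub_cancel] at h3
      exact absurd h3 h1.asymm
  · intro hcons
    have hkn : cB S n ≤ n := cB_le S n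
    -- f basic facts
    have hf_mem : ∀ j, j + 1 ∈ S → fB n S j = n - cB S n + cB S j + 1 := by
      intro j hj; simp [fB, hj]
    have hf_not : ∀ j, j + 1 ∉ S → fB n S j = j - cB S j + 1 := by
      intro j hj; simp [fB, hj]
    have hf_pos : ∀ j, 1 ≤ fB n S j := by
      intro j
      by_cases hj : j + 1 ∈ S
      · rw [hf_mem j hj]; omega
      · rw [hf_not j hj]; omega
    have hf_small : ∀ j, j < n → j + 1 ∉ S → fB n S j ≤ n - cB S n := by
      intro j hjn hj
      have := cB_key S hjn hj
      have := cB_le S j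
      rw [hf_not j hj]; omega
    have hf_big : ∀ j, j + 1 ∈ S → n - cB S n + 1 ≤ fB n S j := by
      intro j hj; rw [hf_mem j hj]; omega
    have hf_le : ∀ j, j < n → fB n S j ≤ n := by
      intro j hjn
      by_cases hj : j + 1 ∈ S
      · have h1 : cB S j + 1 ≤ cB S n := by
          have := cB_succ_mem S hj
          have := cB_mono S (show j + 1 ≤ n by omega)
          omega
        rw [hf_mem j hj]; omega
      · have := hf_small j hjn hj; omega
    -- a facts
    have ha_eq : ∀ j, ¬(j = 0 ∧ 0 ∈ S) → aB n S j = (fB n S j : ℤ) := by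
      intro j hj; simp [aB, hj]
    have ha_neg : 0 ∈ S → aB n S 0 = -(fB n S 0 : ℤ) := by
      intro h0; simp [aB, h0]
    have ha_natAbs : ∀ j, (aB n S j).natAbs = fB n S j := by
      intro j
      by_cases hj : j = 0 ∧ 0 ∈ S
      · rw [hj.1, ha_neg hj.2]; simp
      · rw [ha_eq j hj]; simp
    have ha_le : ∀ j, aB n S j ≤ (fB n S j : ℤ) := by
      intro j
      by_cases hj : j = 0 ∧ 0 ∈ S
      · rw [hj.1, ha_neg hj.2]
        have := hf_pos 0; omega
      · rw [ha_eq j hj]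
    refine ⟨(List.range n).map (aB n S), ?_, ?_⟩
    · -- permutation claim
      have hmapeq : ((List.range n).map (aB n S)).map Int.natAbs
          = (List.range n).map (fB n S) := by
        rw [List.map_map]
        exact List.map_congr_left fun j _ => ha_natAbs j
      rw [hmapeq]
      have hlen : ((List.range n).map (fB n S)).length = (List.range' 1 n).length := by
        simp
      have hnodup : ((List.range n).map (fB n S)).Nodup := by
        refine List.Nodup.map_on ?_ List.nodup_range
        intro x hx y hy hxy
        rw [List.mem_range] at hx hy
        by_contra hne
        wlog hlt : x < y generalizing x y
        · exact this y hy x hx hxy.symm (Ne.symm hne) (by omega)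
        by_cases hFx : x + 1 ∈ S <;> by_cases hFy : y + 1 ∈ S
        · rw [hf_mem x hFx, hf_mem y hFy] at hxy
          have h1 : cB S x + 1 ≤ cB S y := by
            have := cB_succ_mem S hFx
            have := cB_mono S (show x + 1 ≤ y by omega)
            omega
          omega
        · have h1 := hf_big x hFx
          have h2 := hf_small y hy hFy
          omega
        · have h1 := hf_big y hFy
          have h2 := hf_small x hx hFx
          omega
        · rw [hf_not x hFx, hf_not y hFy] at hxy
          have h1 : cB S y ≤ cB S x + (y - (x + 1)) := by
            have := cB_le_add S (show x + 1 ≤ y by omega)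
            have := cB_succ_not_mem S hFx
            omega
          have := cB_le S x
          have := cB_le S y
          omega
      have hsub : ((List.range n).map (fB n S)) ⊆ List.range' 1 n := by
        intro x hx
        rw [List.mem_map] at hx
        obtain ⟨j, hj, rfl⟩ := hx
        rw [List.mem_range] at hj
        rw [List.mem_range'_1]
        exact ⟨hf_pos j, by have := hf_le j hj; omega⟩
      exact (List.subperm_of_subset hnodup hsub).perm_of_length_le (le_of_eq hlen.symm)
    · -- peak set claim
      have hlen : ((List.range n).map (aB n S)).length = n := by simp
      have hval : ∀ m, 1 ≤ m → m ≤ n →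
          valB ((List.range n).map (aB n S)) m = aB n S (m - 1) := by
        intro m hm1 hmn
        have hm : m - 1 < n := by omega
        simp only [valB, if_neg (by omega : ¬ m = 0)]
        rw [List.getD_eq_getElem?_getD, List.getElem?_map, List.getElem?_range hm]
        rfl
      have h0 : valB ((List.range n).map (aB n S)) 0 = 0 := by simp [valB]
      ext i
      simp only [peakSetB, Set.mem_setOf_eq, hlen]
      constructor
      · rintro ⟨hin, h1, h2⟩
        rw [hval (i + 1) (by omega) (by omega)] at h1
        simp only [Nat.add_sub_cancel] at h1
        by_cases hi0 : i = 0
        · subst hi0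
          rw [h0] at h1
          -- h1 : aB n S 0 < 0
          by_contra h0S
          rw [ha_eq 0 (by tauto)] at h1
          have := hf_pos 0
          omega
        · -- i ≥ 1; show i ∈ S
          by_contra hiS
          have hF : ¬ ((i - 1) + 1 ∈ S) := by
            rwa [show i - 1 + 1 = i by omega]
          rw [hval i (by omega) (by omega)] at h1
          -- h1 : aB n S i < aB n S (i - 1)
          have hlt : aB n S (i - 1) < aB n S i := by
            have hieq : (i - 1) + 1 = i := by omega
            by_cases hFi : i + 1 ∈ S
            · have h3 := hf_big i hFi
              have h4 : aB n S (i - 1) ≤ ((n - cB S n : ℕ) : ℤ) := by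
                have := hf_small (i - 1) (by omega) hF
                have := ha_le (i - 1)
                omega
              rw [ha_eq i (by omega)]
              omega
            · have h3 : fB n S (i - 1) < fB n S i := by
                rw [hf_not (i - 1) hF, hf_not i hFi]
                have h5 : cB S i = cB S (i - 1) := by
                  have := cB_succ_not_mem S hF
                  rw [hieq] at this
                  omega
                have := cB_le S (i - 1)
                omega
              have := ha_le (i - 1)
              rw [ha_eq i (by omega)]
              omega
          omega
      · intro hiS
        have hin : i < n := by have := hS i hiS; omega
        refine ⟨hin, ?_, ?_⟩
        · rw [hval (i + 1) (by omega) (by omega)]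
          simp only [Nat.add_sub_cancel]
          by_cases hi0 : i = 0
          · subst hi0
            rw [h0, ha_neg hiS]
            have := hf_pos 0
            omega
          · rw [hval i (by omega) (by omega)]
            have hieq : (i - 1) + 1 = i := by omega
            have hFim : (i - 1) + 1 ∈ S := by rwa [hieq]
            have hFi : i + 1 ∉ S := hcons i hiS
            have h1 := hf_big (i - 1) hFim
            have h2 := hf_small i hin hFi
            have hne : ¬(i - 1 = 0 ∧ 0 ∈ S) := by
              rintro ⟨h', h0S⟩
              have h1S : (0:ℕ) + 1 ∉ S := hcons 0 h0S
              have hi1 : i = 1 := by omega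
              rw [hi1] at hiS
              exact h1S hiS
            rw [ha_eq i (fun h => hi0 h.1), ha_eq (i - 1) hne]
            omega
        · by_cases hi0 : i = 0
          · exact Or.inl hi0
          · right
            rw [hval i (by omega) (by omega)]
            have hieq : (i - 1) + 1 = i := by omega
            have hFim : (i - 1) + 1 ∈ S := by rwa [hieq]
            have hbig := hf_big (i - 1) hFim
            have haim : aB n S (i - 1) = (fB n S (i - 1) : ℤ) := by
              apply ha_eq
              rintro ⟨h0', h0S⟩
              rw [h0'] at hieq
              exact absurd hiS (by rw [← hieq]; exact hcons 0 h0S)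
            by_cases hi1 : i = 1
            · subst hi1
              have h0' : valB ((List.range n).map (aB n S)) (1 - 1) = 0 := by
                simp [valB]
              rw [h0', haim]
              have := hf_pos (1 - 1)
              omega
            · -- i ≥ 2: compare a (i-2) < a (i-1)
              rw [hval (i - 1) (by omega) (by omega)]
              have hF2 : (i - 1 - 1) + 1 ∉ S := by
                rw [show i - 1 - 1 + 1 = i - 1 by omega]
                intro hmem
                exact absurd hiS (by rw [← hieq]; exact hcons (i - 1) hmem)
              have hsmall := hf_small (i - 1 - 1) (by omega) hF2
              have := ha_le (i - 1 - 1)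
              rw [haim]
              omega
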